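/- For every r > 1 and all x, y ∈ (0,1): w_r(x+y) − w_r(x) − w_r(y) ≤ r(r+3)·2^{(r−3)₊}·xy(x+y), where (r−3)₊ = max{r−3, 0}. -/
import Mathlib


open MeasureTheory Set Real
open scoped ENNReal

lemma rpow_mvt (p : ℝ) (hp : 0 ≤ p) {s : ℝ} (h1 : 1 ≤ s) (h2 : s ≤ 2) :
    s ^ p - 1 ≤ p * 2 ^ max (p - 1) 0 * (s - 1) := by
  have hC : ∀ x ∈ Icc (1:ℝ) 2, ‖p * x ^ (p - 1)‖ ≤ p * 2 ^ max (p - 1) 0 := by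
    intro x hx
    have hx1 : (1:ℝ) ≤ x := hx.1
    have hxp : (0:ℝ) ≤ x ^ (p-1) := rpow_nonneg (by linarith) _
    rw [norm_mul, norm_of_nonneg hxp, Real.norm_eq_abs, abs_of_nonneg hp]
    gcongr
    rcases le_total (p - 1) 0 with h | h
    · calc x ^ (p-1) ≤ x ^ (0:ℝ) := rpow_le_rpow_of_exponent_le hx1 h
        _ = 1 := rpow_zero x
        _ ≤ 2 ^ max (p-1) 0 := one_le_rpow one_le_two (le_max_right _ _)
    · rw [max_eq_left h]
      exact rpow_le_rpow (by linarith) hx.2 h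
  have hd : ∀ x ∈ Icc (1:ℝ) 2, HasDerivWithinAt (fun t : ℝ => t ^ p)
      (p * x ^ (p-1)) (Icc (1:ℝ) 2) x := fun x hx =>
    (Real.hasDerivAt_rpow_const (Or.inl (by linarith [hx.1] : (0:ℝ) < x).ne')).hasDerivWithinAt
  have := Convex.norm_image_sub_le_of_norm_hasDerivWithin_le
    (f' := fun x => p * x ^ (p-1)) hd hC
    (hs := convex_Icc (1:ℝ) 2) (mem_Icc.mpr ⟨le_refl 1, one_le_two⟩) (mem_Icc.mpr ⟨h1, h2⟩)
  simp only [Real.one_rpow] at this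
  calc s ^ p - 1 ≤ ‖s ^ p - 1‖ := le_norm_self _
    _ ≤ p * 2 ^ max (p-1) 0 * ‖s - 1‖ := this
    _ = p * 2 ^ max (p-1) 0 * (s - 1) := by rw [norm_of_nonneg (by linarith)]

lemma coef_ineq (r M : ℝ) (hr : 1 < r) (hM1 : 1 ≤ M) :
    (r-1)*(2*M) + 3*(r-1)/2 ≤ r * (r+3) * M := by
  nlinarith [mul_nonneg (by linarith : (0:ℝ) ≤ M - 1)
    (by nlinarith : (0:ℝ) ≤ r^2 + r + 2), sq_nonneg (2*r-1)]

/-- The weight `w_r`: `w_r(x) = ((r−1)/2)x³` on `[0,1]` and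
`w_r(x) = x^r + ((r−3)/2)x` for `x > 1`. -/
noncomputable def wgt (r x : ℝ) : ℝ :=
  if x ≤ 1 then ((r - 1) / 2) * x ^ 3 else x ^ r + ((r - 3) / 2) * x

/-- for every `r > 1` and all `x, y ∈ (0,1)`,
`w_r(x+y) − w_r(x) − w_r(y) ≤ r(r+3) 2^{(r−3)₊} xy(x+y)`. -/
theorem wr_small_small_inequality (r : ℝ) (hr : 1 < r) :
    ∀ x ∈ Ioo (0 : ℝ) 1, ∀ y ∈ Ioo (0 : ℝ) 1,
      wgt r (x + y) - wgt r x - wgt r y ≤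
        r * (r + 3) * (2 : ℝ) ^ max (r - 3) 0 * (x * y * (x + y)) := by
  intro x hx y hy
  obtain ⟨hx0, hx1⟩ := hx
  obtain ⟨hy0, hy1⟩ := hy
  set M : ℝ := (2 : ℝ) ^ max (r - 3) 0 with hM
  have hM1 : (1:ℝ) ≤ M := one_le_rpow one_le_two (le_max_right _ _)
  clear_value M
  have hwx : wgt r x = ((r - 1) / 2) * x ^ 3 := if_pos hx1.le
  have hwy : wgt r y = ((r - 1) / 2) * y ^ 3 := if_pos hy1.le
  rcases le_or_gt (x + y) 1 with hs | hs
  · have hws : wgt r (x + y) = ((r - 1) / 2) * (x + y) ^ 3 := if_pos hs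
    rw [hws, hwx, hwy]
    have hP : (0:ℝ) < x * y * (x + y) := by positivity
    have hrr : (0:ℝ) < r * (r + 3) := by nlinarith
    have hc1 : 3 * (r - 1) / 2 ≤ r * (r + 3) * M := by
      have := mul_le_mul_of_nonneg_left hM1 hrr.le
      nlinarith [sq_nonneg r]
    have heq : (r-1)/2*(x+y)^3 - (r-1)/2*x^3 - (r-1)/2*y^3
        = 3*(r-1)/2*(x*y*(x+y)) := by ring
    linarith [mul_le_mul_of_nonneg_right hc1 hP.le]
  · have hws : wgt r (x + y) = (x + y) ^ r + ((r - 3) / 2) * (x + y) :=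
      if_neg (not_le.mpr hs)
    rw [hws, hwx, hwy]
    set s := x + y with hsdef
    clear_value s
    have hs2 : s ≤ 2 := by linarith
    -- xy > s - 1
    have hxy : s - 1 < x * y := by nlinarith
    -- key bound on s^(r-1)
    have hkey := rpow_mvt (r - 1) (by linarith) hs.le hs2
    -- 2^(max (r-2) 0) ≤ 2 * M
    have hK : (2:ℝ) ^ max (r - 1 - 1) 0 ≤ 2 * M := by
      rcases le_or_gt 3 r with h3 | h3
      · have : max (r - 1 - 1) 0 = (r - 3) + 1 := by
          rw [max_eq_left (by linarith)]; ring
        rw [this, rpow_add (by norm_num), rpow_one, hM, max_eq_left (by linarith)]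
        exact le_of_eq (mul_comm _ _)
      · have : (2:ℝ) ^ max (r - 1 - 1) 0 ≤ 2 ^ (1:ℝ) := by
          apply rpow_le_rpow_of_exponent_le one_le_two
          rcases le_total (r - 1 - 1) 0 with h | h
          · rw [max_eq_right h]; norm_num
          · rw [max_eq_left (by linarith)]; linarith
        rw [rpow_one] at this
        linarith
    have hs1 : (1:ℝ) ≤ s := hs.le
    have hsr : s ^ r = s * s ^ (r - 1) := by
      rw [← rpow_one_add' (by linarith) (by linarith)]
      ring_nf
    have hsK : s ^ (r-1) ≤ 1 + (r-1) * (2*M) * (s-1) := by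
      nlinarith [mul_le_mul_of_nonneg_left hK (by linarith : (0:ℝ) ≤ r - 1),
        mul_nonneg (by linarith : (0:ℝ) ≤ s - 1) (by linarith : (0:ℝ) ≤ r - 1)]
    have hsrb : s ^ r ≤ s + (r-1) * (2*M) * (s * (s-1)) := by
      calc s ^ r = s * s ^ (r-1) := hsr
        _ ≤ s * (1 + (r-1)*(2*M)*(s-1)) := by
            apply mul_le_mul_of_nonneg_left hsK (by linarith)
        _ = s + (r-1)*(2*M)*(s*(s-1)) := by ring
    -- s(s-1) ≤ s * xy
    have hss : s * (s - 1) ≤ s * (x * y) := by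
      apply mul_le_mul_of_nonneg_left hxy.le (by linarith)
    have hxys : (0:ℝ) < x * y * s := mul_pos (mul_pos hx0 hy0) (by linarith)
    -- final
    have hfin : s + ((r-3)/2)*s - ((r-1)/2)*(x^3 + y^3)
        ≤ (3*(r-1)/2) * (x*y*s) := by
      rw [hsdef]
      have h2 : (0:ℝ) ≤ (x+y)^2 - 1 := by nlinarith
      nlinarith [mul_nonneg (by linarith : (0:ℝ) ≤ r - 1)
        (mul_nonneg (by linarith : (0:ℝ) ≤ x + y) h2)]
    have hcoef := coef_ineq r M hr hM1
    have h4 : (r-1)*(2*M)*(s*(s-1)) ≤ (r-1)*(2*M)*(s*(x*y)) :=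
      mul_le_mul_of_nonneg_left hss
        (mul_nonneg (by linarith) (by linarith))
    have hmul := mul_le_mul_of_nonneg_right hcoef hxys.le
    linarith [hsrb, h4, hfin, hmul]
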